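/- Let G be a finite connected simple graph on vertex set V with N = |V| ≥ 3 vertices, and consider the taxi drive on G with uniformly random destinations (β = 0): starting from a fixed vertex t_0, let t_1, t_2, … be i.i.d. uniform on V, and for each k let trip k traverse an independently and uniformly chosen shortest path from t_{k-1} to t_k, spending one time unit on each vertex of that path except its origin (a trip with t_{k-1} = t_k takes zero time). Then almost surely, for every vertex i, the fraction of time units spent at vertex i during the first n trips converges, as n → ∞, to b_i' / Σ_{j∈V} b_j'. That is, the stationary density of the taxi drive at each vertex equals its normalized adjusted betweenness. -/

import Mathlib

open Topology


open SimpleGraph Finset MeasureTheory ProbabilityTheory Filter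

/-- The number `σ_{st}` of shortest paths (walks of length `G.dist s t`) from `s` to `t`. -/
noncomputable def numSP {V : Type*} [Fintype V] [DecidableEq V] (G : SimpleGraph V)
    [DecidableRel G.Adj] (s t : V) : ℕ :=
  (G.finsetWalkLength (G.dist s t) s t).card

/-- The number `σ_{st}(i)` of shortest paths from `s` to `t` that contain the vertex `i`. -/
noncomputable def numSPthrough {V : Type*} [Fintype V] [DecidableEq V] (G : SimpleGraph V)
    [DecidableRel G.Adj] (i s t : V) : ℕ :=
  ((G.finsetWalkLength (G.dist s t) s t).filter (fun w => i ∈ w.support)).card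

/-- The adjusted betweenness
`b_i' = (1/((N-1)(N-2))) Σ_{(s,t) : s ≠ t, s ≠ i} σ_{st}(i)/σ_{st}`. -/
noncomputable def adjBetweenness {V : Type*} [Fintype V] [DecidableEq V] (G : SimpleGraph V)
    [DecidableRel G.Adj] (i : V) : ℝ :=
  (1 / (((Fintype.card V : ℝ) - 1) * ((Fintype.card V : ℝ) - 2))) *
    ∑ s : V, ∑ t : V,
      if s ≠ t ∧ s ≠ i then (numSPthrough G i s t : ℝ) / (numSP G s t : ℝ) else 0

/-- The randomness used by the taxi drive in a single trip: a (uniformly random) destination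
vertex together with a table assigning to each ordered pair `(s,t)` of vertices a (uniformly
random) shortest path from `s` to `t`.  Choosing this datum uniformly at random means exactly
that the destination is uniform on `V` and that, independently, for each pair `(s,t)` a
shortest path is chosen uniformly at random among the `σ_{st}` shortest paths. -/
abbrev TaxiStep {V : Type*} [Fintype V] [DecidableEq V] (G : SimpleGraph V)
    [DecidableRel G.Adj] : Type _ :=
  V × ∀ s t : V, ↥(G.finsetWalkLength (G.dist s t) s t)

/-- The sequence of trip endpoints of the taxi drive: `taxiDest G t₀ X 0 = t₀` is the fixed
starting vertex, and for `k ≥ 1` the destination of the `k`-th trip is the (random) vertex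
drawn at step `k`. -/
def taxiDest {V : Type*} [Fintype V] [DecidableEq V] {G : SimpleGraph V} [DecidableRel G.Adj]
    {Ω : Type*} (t₀ : V) (X : ℕ → Ω → TaxiStep G) : ℕ → Ω → V
  | 0 => fun _ => t₀
  | k + 1 => fun ω => (X (k + 1) ω).1

/-- The shortest path traversed during the `k`-th trip (`k ≥ 1`) of the taxi drive: the
uniformly chosen shortest path from the previous destination `t_{k-1}` to the new
destination `t_k`. -/
noncomputable def taxiTrip {V : Type*} [Fintype V] [DecidableEq V] {G : SimpleGraph V}
    [DecidableRel G.Adj] {Ω : Type*} (t₀ : V) (X : ℕ → Ω → TaxiStep G) (k : ℕ) (ω : Ω) :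
    G.Walk (taxiDest t₀ X (k - 1) ω) (taxiDest t₀ X k ω) :=
  ((X k ω).2 (taxiDest t₀ X (k - 1) ω) (taxiDest t₀ X k ω)).val

/-- The number of time units the taxi spends at vertex `i` during its `k`-th trip: the taxi
visits every vertex of the traversed shortest path except the origin of the trip, each for one
time unit (so a trip whose destination equals its origin takes zero time). -/
noncomputable def taxiVisits {V : Type*} [Fintype V] [DecidableEq V] {G : SimpleGraph V}
    [DecidableRel G.Adj] {Ω : Type*} (t₀ : V) (X : ℕ → Ω → TaxiStep G) (i : V) (k : ℕ)
    (ω : Ω) : ℕ :=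
  (taxiTrip t₀ X k ω).support.tail.count i

/-- The duration (number of time units) of the `k`-th trip of the taxi drive. -/
noncomputable def taxiTripTime {V : Type*} [Fintype V] [DecidableEq V] {G : SimpleGraph V}
    [DecidableRel G.Adj] {Ω : Type*} (t₀ : V) (X : ℕ → Ω → TaxiStep G) (k : ℕ) (ω : Ω) : ℕ :=
  (taxiTrip t₀ X k ω).length

lemma aux_sum_pi_eval {ι : Type*} [Fintype ι] [DecidableEq ι] (γ : ι → Type*)
    [∀ i, Fintype (γ i)] (i₀ : ι) (g : γ i₀ → ℝ) :
    ∑ τ : (∀ i, γ i), g (τ i₀)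
      = (Fintype.card (∀ j : {j // j ≠ i₀}, γ j) : ℝ) * ∑ c : γ i₀, g c := by
  rw [← Equiv.sum_comp (Equiv.piSplitAt i₀ γ).symm (fun τ => g (τ i₀))]
  rw [Fintype.sum_prod_type]
  simp only [Equiv.piSplitAt_symm_apply, dif_pos rfl]
  simp [Finset.sum_const, mul_comm, Finset.sum_mul]

lemma aux_card_pi_split {ι : Type*} [Fintype ι] [DecidableEq ι] (γ : ι → Type*)
    [∀ i, Fintype (γ i)] (i₀ : ι) :
    Fintype.card (∀ i, γ i)
      = Fintype.card (γ i₀) * Fintype.card (∀ j : {j // j ≠ i₀}, γ j) := by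
  rw [Fintype.card_congr (Equiv.piSplitAt i₀ γ), Fintype.card_prod]

lemma aux_div_div (a b c : ℝ) (hc : c ≠ 0) : (a / c) / (b / c) = a / b := by
  rcases eq_or_ne b 0 with rfl | hb
  · simp
  · field_simp

lemma aux_sum_count {V : Type*} [Fintype V] [DecidableEq V] (l : List V) :
    ∑ j : V, l.count j = l.length := by
  induction l with
  | nil => simp
  | cons a l ih =>
    simp only [List.count_cons, Finset.sum_add_distrib, ih, List.length_cons]
    congr 1
    simp [Finset.sum_ite_eq']


lemma aux_half_ratio (c : ℕ) :
    Tendsto (fun n : ℕ => (((n - c) / 2 : ℕ) : ℝ) / (n : ℝ)) atTop (𝓝 (1 / 2)) := by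
  have hlo : Tendsto (fun n : ℕ => 1 / 2 - ((c : ℝ) + 3) * (1 / (n : ℝ))) atTop (𝓝 (1 / 2)) := by
    have := (tendsto_one_div_atTop_nhds_zero_nat).const_mul ((c : ℝ) + 3)
    simpa using (tendsto_const_nhds (x := (1 / 2 : ℝ)) (f := atTop)).sub this
  have hhi : Tendsto (fun n : ℕ => (1 / 2 : ℝ)) atTop (𝓝 (1 / 2)) := tendsto_const_nhds
  apply tendsto_of_tendsto_of_tendsto_of_le_of_le' hlo hhi
  · filter_upwards [eventually_ge_atTop 1] with n hn
    have hn0 : (0 : ℝ) < (n : ℝ) := by exact_mod_cast hn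
    have h1 : n ≤ 2 * ((n - c) / 2) + (c + 1) := by omega
    have h1' : (n : ℝ) ≤ 2 * (((n - c) / 2 : ℕ) : ℝ) + ((c : ℝ) + 1) := by exact_mod_cast h1
    rw [show (1:ℝ)/2 - ((c : ℝ) + 3) * (1/(n:ℝ)) = ((n:ℝ) - 2*((c:ℝ)+3))/(2*(n:ℝ)) by
      field_simp, div_le_div_iff₀ (by positivity) hn0]
    nlinarith [Nat.cast_nonneg (α := ℝ) c]
  · filter_upwards [eventually_ge_atTop 1] with n hn
    have hn0 : (0 : ℝ) < (n : ℝ) := by exact_mod_cast hn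
    have h1 : 2 * ((n - c) / 2) ≤ n := by omega
    have h1' : 2 * (((n - c) / 2 : ℕ) : ℝ) ≤ (n : ℝ) := by exact_mod_cast h1
    rw [div_le_div_iff₀ hn0 (by norm_num : (0:ℝ) < 2)]
    linarith

lemma aux_combine (Y : ℕ → ℝ) (m : ℝ)
    (hA : Tendsto (fun M : ℕ => (∑ j ∈ Finset.range M, Y (2 * j + 2)) / (M : ℝ))
      atTop (𝓝 m))
    (hB : Tendsto (fun M : ℕ => (∑ j ∈ Finset.range M, Y (2 * j + 3)) / (M : ℝ))
      atTop (𝓝 m)) :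
    Tendsto (fun n : ℕ => (∑ k ∈ Finset.Icc 1 n, Y k) / (n : ℝ)) atTop (𝓝 m) := by
  set SA : ℕ → ℝ := fun M => ∑ j ∈ Finset.range M, Y (2 * j + 2) with hSA
  set SB : ℕ → ℝ := fun M => ∑ j ∈ Finset.range M, Y (2 * j + 3) with hSB
  have key : ∀ n : ℕ, 1 ≤ n →
      (∑ k ∈ Finset.Icc 1 n, Y k) = Y 1 + SA (n / 2) + SB ((n - 1) / 2) := by
    intro n hn
    induction n, hn using Nat.le_induction with
    | base => simp [SA, SB]
    | succ n hn ih =>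
      rw [Finset.sum_Icc_succ_top (by omega : 1 ≤ n + 1), ih]
      rcases Nat.even_or_odd n with ⟨a, ha⟩ | ⟨a, ha⟩
      · -- n = 2a even, n+1 odd; B range grows
        have h1 : (n + 1) / 2 = n / 2 := by omega
        have h2 : (n + 1 - 1) / 2 = (n - 1) / 2 + 1 := by omega
        have h3 : 2 * ((n - 1) / 2) + 3 = n + 1 := by omega
        rw [h1, h2]
        simp only [SA, SB, Finset.sum_range_succ, h3]
        ring
      · -- n odd, n+1 even; A range grows
        have h1 : (n + 1) / 2 = n / 2 + 1 := by omega
        have h2 : (n + 1 - 1) / 2 = (n - 1) / 2 := by omega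
        have h3 : 2 * (n / 2) + 2 = n + 1 := by omega
        rw [h1, h2]
        simp only [SA, SB, Finset.sum_range_succ, h3]
        ring
  have hd2 : Tendsto (fun n : ℕ => n / 2) atTop atTop :=
    tendsto_atTop_atTop.2 fun b => ⟨2 * b, fun n hn => by omega⟩
  have hd2' : Tendsto (fun n : ℕ => (n - 1) / 2) atTop atTop :=
    tendsto_atTop_atTop.2 fun b => ⟨2 * b + 1, fun n hn => by omega⟩
  have hAc : Tendsto (fun n : ℕ => SA (n / 2) / ((n / 2 : ℕ) : ℝ)) atTop (𝓝 m) := hA.comp hd2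
  have hBc : Tendsto (fun n : ℕ => SB ((n - 1) / 2) / (((n - 1) / 2 : ℕ) : ℝ)) atTop (𝓝 m) :=
    hB.comp hd2'
  have hz : Tendsto (fun n : ℕ => Y 1 * (1 / (n : ℝ))) atTop (𝓝 0) := by
    simpa using tendsto_one_div_atTop_nhds_zero_nat.const_mul (Y 1)
  have h2 := aux_half_ratio 0
  have h2' := aux_half_ratio 1
  simp only [Nat.sub_zero] at h2
  have main : Tendsto (fun n : ℕ =>
      Y 1 * (1 / (n : ℝ))
        + (SA (n / 2) / ((n / 2 : ℕ) : ℝ)) * (((n / 2 : ℕ) : ℝ) / (n : ℝ))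
        + (SB ((n - 1) / 2) / (((n - 1) / 2 : ℕ) : ℝ)) * ((((n - 1) / 2 : ℕ) : ℝ) / (n : ℝ)))
      atTop (𝓝 (0 + m * (1 / 2) + m * (1 / 2))) :=
    (hz.add (hAc.mul h2)).add (hBc.mul h2')
  have : (0 : ℝ) + m * (1 / 2) + m * (1 / 2) = m := by ring
  rw [this] at main
  apply main.congr'
  filter_upwards [eventually_ge_atTop 1] with n hn
  rw [key n hn, add_div, add_div]
  congr 1
  · congr 1
    · field_simp
    · rcases eq_or_ne ((n / 2 : ℕ) : ℝ) 0 with h | h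
      · have : SA (n / 2) = 0 := by
          have : n / 2 = 0 := by exact_mod_cast h
          simp [SA, this]
        simp [h, this]
      · field_simp
  · rcases eq_or_ne (((n - 1) / 2 : ℕ) : ℝ) 0 with h | h
    · have : SB ((n - 1) / 2) = 0 := by
        have : (n - 1) / 2 = 0 := by exact_mod_cast h
        simp [SB, this]
      simp [h, this]
    · field_simp

section
variable {V : Type*} [Fintype V] [DecidableEq V] (G : SimpleGraph V) [DecidableRel G.Adj]

lemma aux_numSP_pos (hconn : G.Connected) (s t : V) : 0 < numSP G s t := by
  obtain ⟨w, hw⟩ := hconn.exists_walk_length_eq_dist s t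
  exact Finset.card_pos.2 ⟨w, SimpleGraph.mem_finsetWalkLength_iff.2 hw⟩

lemma aux_isPath {s t : V} {w : G.Walk s t}
    (hw : w ∈ G.finsetWalkLength (G.dist s t) s t) : w.IsPath :=
  w.isPath_of_length_eq_dist (SimpleGraph.mem_finsetWalkLength_iff.1 hw)

lemma aux_count_tail {i s t : V} {w : G.Walk s t}
    (hw : w ∈ G.finsetWalkLength (G.dist s t) s t) :
    w.support.tail.count i = if i ∈ w.support ∧ i ≠ s then 1 else 0 := by
  have hpath := aux_isPath G hw
  have hnodup : w.support.Nodup := hpath.support_nodup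
  have hcons : w.support = s :: w.support.tail := w.support_eq_cons
  have hs_not : s ∉ w.support.tail := by
    rw [hcons] at hnodup
    exact (List.nodup_cons.1 hnodup).1
  have htail_nodup : w.support.tail.Nodup := by
    rw [hcons] at hnodup
    exact (List.nodup_cons.1 hnodup).2
  by_cases h : i ∈ w.support ∧ i ≠ s
  · obtain ⟨hmem, hne⟩ := h
    rw [if_pos ⟨hmem, hne⟩]
    have : i ∈ w.support.tail := by
      rw [hcons] at hmem
      rcases List.mem_cons.1 hmem with h' | h'
      · exact absurd h' hne
      · exact h'
    exact List.count_eq_one_of_mem htail_nodup this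
  · rw [if_neg h]
    push_neg at h
    by_cases hi : i ∈ w.support
    · have : i = s := h hi
      subst this
      exact List.count_eq_zero_of_not_mem hs_not
    · apply List.count_eq_zero_of_not_mem
      intro hmem
      exact hi (by rw [hcons]; exact List.mem_cons_of_mem _ hmem)

lemma aux_sum_count_paths (i s t : V) :
    ∑ w ∈ G.finsetWalkLength (G.dist s t) s t, ((w.support.tail.count i : ℝ))
      = if s ≠ t ∧ s ≠ i then (numSPthrough G i s t : ℝ) else 0 := by
  by_cases hst : s = t
  · subst hst
    rw [if_neg (by simp)]
    apply Finset.sum_eq_zero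
    intro w hw
    have hlen : w.length = 0 := by
      have := SimpleGraph.mem_finsetWalkLength_iff.1 hw
      simpa [SimpleGraph.dist_self] using this
    have : w.support.tail = [] := by
      have h1 : w.support.length = 1 := by rw [SimpleGraph.Walk.length_support, hlen]
      have : w.support.tail.length = 0 := by
        rw [List.length_tail, h1]
      exact List.eq_nil_of_length_eq_zero this
    simp [this]
  · by_cases hsi : s = i
    · subst hsi
      rw [if_neg (by tauto)]
      apply Finset.sum_eq_zero
      intro w hw
      rw [aux_count_tail G hw]
      simp
    · rw [if_pos ⟨hst, hsi⟩]
      rw [show (numSPthrough G i s t : ℝ)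
          = ∑ w ∈ (G.finsetWalkLength (G.dist s t) s t).filter (fun w => i ∈ w.support),
              (1 : ℝ) by simp [numSPthrough]]
      rw [Finset.sum_filter]
      apply Finset.sum_congr rfl
      intro w hw
      rw [aux_count_tail G hw]
      have hi : i ≠ s := fun h => hsi h.symm
      simp [hi]

lemma aux_numSPthrough_end (s t : V) : numSPthrough G t s t = numSP G s t := by
  unfold numSPthrough numSP
  congr 1
  apply Finset.filter_true_of_mem
  intro w _
  exact SimpleGraph.Walk.end_mem_support w

end

noncomputable def mval {V : Type*} [Fintype V] [DecidableEq V] (G : SimpleGraph V)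
    [DecidableRel G.Adj] (i : V) : ℝ :=
  (1 / (Fintype.card V : ℝ) ^ 2) *
    ∑ s : V, ∑ t : V,
      if s ≠ t ∧ s ≠ i then (numSPthrough G i s t : ℝ) / (numSP G s t : ℝ) else 0

noncomputable def taxiF {V : Type*} [Fintype V] [DecidableEq V] (G : SimpleGraph V)
    [DecidableRel G.Adj] (i : V) : TaxiStep G × TaxiStep G → ℝ :=
  fun q => ((q.2.2 q.1.1 q.2.1).val.support.tail.count i : ℝ)

section
variable {V : Type*} [Fintype V] [DecidableEq V] (G : SimpleGraph V) [DecidableRel G.Adj]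


set_option maxHeartbeats 1000000 in
lemma aux_sum_table (hconn : G.Connected) (i s t : V) :
    ∑ τ : (∀ s' t' : V, ↥(G.finsetWalkLength (G.dist s' t') s' t')), ((τ s t).val.support.tail.count i : ℝ)
      = (Fintype.card (∀ s' t' : V, ↥(G.finsetWalkLength (G.dist s' t') s' t')) : ℝ) *
        (if s ≠ t ∧ s ≠ i then (numSPthrough G i s t : ℝ) / (numSP G s t : ℝ) else 0) := by
  classical
  set K₁ : ℕ := Fintype.card (∀ j : {j // j ≠ s}, ∀ t' : V, ↥(G.finsetWalkLength (G.dist j.val t') j.val t')) with hK₁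
  set K₂ : ℕ := Fintype.card (∀ j : {j // j ≠ t}, ↥(G.finsetWalkLength (G.dist s j.val) s j.val)) with hK₂
  have e1 : ∑ τ : (∀ s' t' : V, ↥(G.finsetWalkLength (G.dist s' t') s' t')), ((τ s t).val.support.tail.count i : ℝ)
      = (K₁ : ℝ) * ∑ σ : (∀ t' : V, ↥(G.finsetWalkLength (G.dist s t') s t')), ((σ t).val.support.tail.count i : ℝ) :=
    aux_sum_pi_eval (fun s' => ∀ t' : V, ↥(G.finsetWalkLength (G.dist s' t') s' t')) s
      (fun σ => ((σ t).val.support.tail.count i : ℝ))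
  have e2 : ∑ σ : (∀ t' : V, ↥(G.finsetWalkLength (G.dist s t') s t')), ((σ t).val.support.tail.count i : ℝ)
      = (K₂ : ℝ) * ∑ p : ↥(G.finsetWalkLength (G.dist s t) s t), ((p.val.support.tail.count i : ℝ)) :=
    aux_sum_pi_eval (fun t' => ↥(G.finsetWalkLength (G.dist s t') s t')) t
      (fun p => ((p.val.support.tail.count i : ℝ)))
  have e3 : ∑ p : ↥(G.finsetWalkLength (G.dist s t) s t), ((p.val.support.tail.count i : ℝ))
      = ∑ w ∈ G.finsetWalkLength (G.dist s t) s t, ((w.support.tail.count i : ℝ)) :=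
    Finset.sum_coe_sort (G.finsetWalkLength (G.dist s t) s t) (fun w => ((w.support.tail.count i : ℝ)))
  have hcardT : Fintype.card (∀ s' t' : V, ↥(G.finsetWalkLength (G.dist s' t') s' t')) = numSP G s t * K₂ * K₁ := by
    have c1 : Fintype.card (∀ s' t' : V, ↥(G.finsetWalkLength (G.dist s' t') s' t')) = Fintype.card (∀ t' : V, ↥(G.finsetWalkLength (G.dist s t') s t')) * K₁ :=
      aux_card_pi_split _ s
    have c2 : Fintype.card (∀ t' : V, ↥(G.finsetWalkLength (G.dist s t') s t')) = Fintype.card ↥(G.finsetWalkLength (G.dist s t) s t) * K₂ :=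
      aux_card_pi_split _ t
    rw [c1, c2, Fintype.card_coe]
    unfold numSP
    ring
  have hσ : (numSP G s t : ℝ) ≠ 0 := by
    exact_mod_cast (aux_numSP_pos G hconn s t).ne'
  rw [e1, e2, e3, aux_sum_count_paths]
  by_cases h : s ≠ t ∧ s ≠ i
  · rw [if_pos h, if_pos h]
    have : (Fintype.card (∀ s' t' : V, ↥(G.finsetWalkLength (G.dist s' t') s' t')) : ℝ) = (numSP G s t : ℝ) * (K₂ : ℝ) * (K₁ : ℝ) := by
      exact_mod_cast congrArg (Nat.cast : ℕ → ℝ) hcardT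
    rw [this]
    field_simp
  · rw [if_neg h, if_neg h]
    ring

lemma aux_sum_taxiF (hconn : G.Connected) (i : V) :
    ∑ q : TaxiStep G × TaxiStep G, taxiF G i q
      = (Fintype.card (TaxiStep G) : ℝ) ^ 2 * mval G i := by
  classical
  rw [Fintype.sum_prod_type]
  have hy : ∀ s : V, ∑ y : TaxiStep G, ((y.2 s y.1).val.support.tail.count i : ℝ)
      = (Fintype.card (∀ s' t' : V, ↥(G.finsetWalkLength (G.dist s' t') s' t')) : ℝ) *
        ∑ t : V, (if s ≠ t ∧ s ≠ i then (numSPthrough G i s t : ℝ) / (numSP G s t : ℝ) else 0) := by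
    intro s
    rw [Fintype.sum_prod_type]
    rw [Finset.mul_sum]
    apply Finset.sum_congr rfl
    intro t _
    exact aux_sum_table G hconn i s t
  have hx : ∑ x : TaxiStep G, ∑ y : TaxiStep G, taxiF G i (x, y)
      = ∑ s : V, ∑ _τ : (∀ s' t' : V, ↥(G.finsetWalkLength (G.dist s' t') s' t')), ((Fintype.card (∀ s' t' : V, ↥(G.finsetWalkLength (G.dist s' t') s' t')) : ℝ) *
          ∑ t : V, (if s ≠ t ∧ s ≠ i then (numSPthrough G i s t : ℝ) / (numSP G s t : ℝ) else 0)) := by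
    rw [Fintype.sum_prod_type]
    apply Finset.sum_congr rfl
    intro s _
    apply Finset.sum_congr rfl
    intro _τ _
    exact hy s
  rw [hx]
  have hcardS : (Fintype.card (TaxiStep G) : ℝ) = (Fintype.card V : ℝ) * (Fintype.card (∀ s' t' : V, ↥(G.finsetWalkLength (G.dist s' t') s' t')) : ℝ) := by
    rw [show Fintype.card (TaxiStep G) = Fintype.card V * Fintype.card (∀ s' t' : V, ↥(G.finsetWalkLength (G.dist s' t') s' t')) from Fintype.card_prod _ _]
    push_cast
    ring
  have hV : Nonempty V := hconn.nonempty
  have hN0 : (Fintype.card V : ℝ) ≠ 0 := Nat.cast_ne_zero.2 Fintype.card_ne_zero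
  simp only [Finset.sum_const, Finset.card_univ, nsmul_eq_mul]
  simp only [← Finset.mul_sum]
  have hPne : ∀ s t : V, Nonempty ↥(G.finsetWalkLength (G.dist s t) s t) := by
    intro s t
    obtain ⟨w, hw⟩ := hconn.exists_walk_length_eq_dist s t
    exact ⟨⟨w, SimpleGraph.mem_finsetWalkLength_iff.2 hw⟩⟩
  haveI : Nonempty (∀ s' t' : V, ↥(G.finsetWalkLength (G.dist s' t') s' t')) :=
    ⟨fun s t => (hPne s t).some⟩
  unfold mval
  rw [hcardS]
  field_simp
end

instance taxiStepMS {V : Type*} [Fintype V] [DecidableEq V] (G : SimpleGraph V)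
    [DecidableRel G.Adj] : MeasurableSpace (TaxiStep G) := ⊤

instance taxiStepMSC {V : Type*} [Fintype V] [DecidableEq V] (G : SimpleGraph V)
    [DecidableRel G.Adj] : MeasurableSingletonClass (TaxiStep G) :=
  ⟨fun _ => trivial⟩

lemma aux_slln {V : Type*} [Fintype V] [DecidableEq V] (G : SimpleGraph V)
    [DecidableRel G.Adj] (hconn : G.Connected)
    {Ω : Type*} [mΩ : MeasurableSpace Ω] (μ : Measure Ω) [IsProbabilityMeasure μ]
    (X : ℕ → Ω → TaxiStep G)
    (hmeas : ∀ k, @Measurable Ω (TaxiStep G) mΩ ⊤ (X k))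
    (hindep : iIndepFun (m := fun _ : ℕ => (⊤ : MeasurableSpace (TaxiStep G))) X μ)
    (hunif : ∀ k, 1 ≤ k → ∀ x : TaxiStep G,
      μ {ω | X k ω = x} = (Fintype.card (TaxiStep G) : ENNReal)⁻¹)
    (i : V) (c : ℕ) (hc : 1 ≤ c) :
    ∀ᵐ ω ∂μ, Tendsto
      (fun M : ℕ => (∑ j ∈ Finset.range M, taxiF G i (X (2 * j + c) ω, X (2 * j + c + 1) ω))
        / (M : ℝ)) atTop (𝓝 (mval G i)) := by
  classical
  have hXmeas : ∀ k, Measurable (X k) := hmeas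
  have hFmeas : Measurable (taxiF G i) := measurable_of_countable _
  have hpairmeas : ∀ a b : ℕ, Measurable (fun ω => (X a ω, X b ω)) := fun a b =>
    (hXmeas a).prodMk (hXmeas b)
  set A : ℕ → Ω → ℝ := fun j ω => taxiF G i (X (2 * j + c) ω, X (2 * j + c + 1) ω) with hA
  have hlaw : ∀ a b : ℕ, 1 ≤ a → 1 ≤ b → a ≠ b → ∀ q : TaxiStep G × TaxiStep G,
      Measure.map (fun ω => (X a ω, X b ω)) μ {q}
        = (Fintype.card (TaxiStep G) : ENNReal)⁻¹ * (Fintype.card (TaxiStep G) : ENNReal)⁻¹ := by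
    rintro a b ha hb hab ⟨x, y⟩
    rw [Measure.map_apply (hpairmeas a b) (measurableSet_singleton _)]
    have hpre : (fun ω => (X a ω, X b ω)) ⁻¹' {(x, y)} = (X a ⁻¹' {x}) ∩ (X b ⁻¹' {y}) := by
      ext ω
      simp [Prod.ext_iff]
    rw [hpre]
    have hind : IndepFun (X a) (X b) μ := hindep.indepFun hab
    rw [hind.measure_inter_preimage_eq_mul _ _ trivial trivial]
    have h1 : X a ⁻¹' {x} = {ω | X a ω = x} := rfl
    have h2 : X b ⁻¹' {y} = {ω | X b ω = y} := rfl
    rw [h1, h2, hunif a ha x, hunif b hb y]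
  have hpairident : ∀ a b a' b' : ℕ, 1 ≤ a → 1 ≤ b → a ≠ b → 1 ≤ a' → 1 ≤ b' → a' ≠ b' →
      IdentDistrib (fun ω => (X a ω, X b ω)) (fun ω => (X a' ω, X b' ω)) μ μ := by
    intro a b a' b' ha hb hab ha' hb' hab'
    refine ⟨(hpairmeas a b).aemeasurable, (hpairmeas a' b').aemeasurable, ?_⟩
    apply MeasureTheory.Measure.ext_of_singleton
    intro q
    rw [hlaw a b ha hb hab q, hlaw a' b' ha' hb' hab' q]
  have hident : ∀ j : ℕ, IdentDistrib (A j) (A 0) μ μ := by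
    intro j
    exact (hpairident (2 * j + c) (2 * j + c + 1) (2 * 0 + c) (2 * 0 + c + 1)
      (by omega) (by omega) (by omega) (by omega) (by omega) (by omega)).comp hFmeas
  have hindepA : Pairwise (Function.onFun (IndepFun · · μ) A) := by
    intro j k hjk
    exact ((hindep.indepFun_prodMk_prodMk hXmeas (2 * j + c) (2 * j + c + 1)
      (2 * k + c) (2 * k + c + 1) (by omega) (by omega) (by omega) (by omega)).comp
      hFmeas hFmeas)
  haveI hprob : IsProbabilityMeasure (Measure.map (fun ω => (X (2 * 0 + c) ω, X (2 * 0 + c + 1) ω)) μ) :=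
    Measure.isProbabilityMeasure_map (hpairmeas _ _).aemeasurable
  have hintF : Integrable (taxiF G i)
      (Measure.map (fun ω => (X (2 * 0 + c) ω, X (2 * 0 + c + 1) ω)) μ) :=
    Integrable.of_finite
  have hint : Integrable (A 0) μ := by
    have := (integrable_map_measure hFmeas.aestronglyMeasurable
      (hpairmeas (2 * 0 + c) (2 * 0 + c + 1)).aemeasurable).1 hintF
    exact this
  have hSne : Nonempty (TaxiStep G) := by
    have hV : Nonempty V := hconn.nonempty
    have hPne : ∀ s t : V, Nonempty ↥(G.finsetWalkLength (G.dist s t) s t) := by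
      intro s t
      obtain ⟨w, hw⟩ := hconn.exists_walk_length_eq_dist s t
      exact ⟨⟨w, SimpleGraph.mem_finsetWalkLength_iff.2 hw⟩⟩
    exact ⟨⟨hV.some, fun s t => (hPne s t).some⟩⟩
  have hcardS : (Fintype.card (TaxiStep G) : ℝ) ≠ 0 := Nat.cast_ne_zero.2 Fintype.card_ne_zero
  have hexp : μ[A 0] = mval G i := by
    have e1 : μ[A 0] = ∫ q, taxiF G i q
        ∂(Measure.map (fun ω => (X (2 * 0 + c) ω, X (2 * 0 + c + 1) ω)) μ) := by
      rw [integral_map (hpairmeas _ _).aemeasurable hFmeas.aestronglyMeasurable]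
    rw [e1, integral_fintype hintF]
    have e2 : ∀ q : TaxiStep G × TaxiStep G,
        (Measure.map (fun ω => (X (2 * 0 + c) ω, X (2 * 0 + c + 1) ω)) μ) {q}
          = (Fintype.card (TaxiStep G) : ENNReal)⁻¹ * (Fintype.card (TaxiStep G) : ENNReal)⁻¹ :=
      hlaw _ _ (by omega) (by omega) (by omega)
    have e3 : ∀ q : TaxiStep G × TaxiStep G,
        ((Measure.map (fun ω => (X (2 * 0 + c) ω, X (2 * 0 + c + 1) ω)) μ) {q}).toReal
          = (Fintype.card (TaxiStep G) : ℝ)⁻¹ * (Fintype.card (TaxiStep G) : ℝ)⁻¹ := by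
      intro q
      rw [e2 q]
      rw [ENNReal.toReal_mul, ENNReal.toReal_inv, ENNReal.toReal_natCast]
    simp only [Measure.real, e3, smul_eq_mul]
    rw [← Finset.mul_sum]
    rw [aux_sum_taxiF G hconn i]
    set C := (Fintype.card (TaxiStep G) : ℝ) with hC
    have h2 : C⁻¹ * C⁻¹ * (C ^ 2 * mval G i) = (C⁻¹ * C) * ((C⁻¹ * C) * mval G i) := by ring
    rw [h2, inv_mul_cancel₀ hcardS]
    ring
  have := strong_law_ae_real A hint hindepA hident
  rw [hexp] at this
  exact this

section
variable {V : Type*} [Fintype V] [DecidableEq V] (G : SimpleGraph V) [DecidableRel G.Adj]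

lemma aux_mval_rel (hN : 3 ≤ Fintype.card V) (i : V) :
    mval G i = (((Fintype.card V : ℝ) - 1) * ((Fintype.card V : ℝ) - 2)
      / (Fintype.card V : ℝ) ^ 2) * adjBetweenness G i := by
  have h3 : (3 : ℝ) ≤ (Fintype.card V : ℝ) := by exact_mod_cast hN
  unfold mval adjBetweenness
  set S := ∑ s : V, ∑ t : V,
      if s ≠ t ∧ s ≠ i then (numSPthrough G i s t : ℝ) / (numSP G s t : ℝ) else 0 with hS
  set N := (Fintype.card V : ℝ) with hNdef
  have h1 : N - 1 ≠ 0 := by intro h; nlinarith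
  have h2 : N - 2 ≠ 0 := by intro h; nlinarith
  have h0 : N ≠ 0 := by intro h; nlinarith
  field_simp

lemma aux_mval_sum_pos (hconn : G.Connected) (hN : 3 ≤ Fintype.card V) :
    0 < ∑ j : V, mval G j := by
  have term_nonneg : ∀ (i s t : V),
      0 ≤ (if s ≠ t ∧ s ≠ i then (numSPthrough G i s t : ℝ) / (numSP G s t : ℝ) else 0) := by
    intro i s t
    split
    · positivity
    · exact le_refl 0
  have mval_nonneg : ∀ i : V, 0 ≤ mval G i := by
    intro i
    unfold mval
    apply mul_nonneg (by positivity)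
    exact Finset.sum_nonneg fun s _ => Finset.sum_nonneg fun t _ => term_nonneg i s t
  obtain ⟨s₁, t₁, hst⟩ := Fintype.exists_pair_of_one_lt_card (α := V) (by omega)
  have hterm : (if s₁ ≠ t₁ ∧ s₁ ≠ t₁ then (numSPthrough G t₁ s₁ t₁ : ℝ) / (numSP G s₁ t₁ : ℝ) else 0)
      = 1 := by
    rw [if_pos ⟨hst, hst⟩, aux_numSPthrough_end]
    have : (numSP G s₁ t₁ : ℝ) ≠ 0 := by
      exact_mod_cast (aux_numSP_pos G hconn s₁ t₁).ne'
    field_simp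
  have hmt : 0 < mval G t₁ := by
    unfold mval
    apply mul_pos (by positivity)
    have hinner : 0 < ∑ t : V,
        (if s₁ ≠ t ∧ s₁ ≠ t₁ then (numSPthrough G t₁ s₁ t : ℝ) / (numSP G s₁ t : ℝ) else 0) := by
      apply Finset.sum_pos' (fun t _ => term_nonneg t₁ s₁ t)
      exact ⟨t₁, Finset.mem_univ _, by rw [hterm]; norm_num⟩
    apply Finset.sum_pos' (fun s _ => Finset.sum_nonneg fun t _ => term_nonneg t₁ s t)
    exact ⟨s₁, Finset.mem_univ _, hinner⟩
  exact Finset.sum_pos' (fun j _ => mval_nonneg j) ⟨t₁, Finset.mem_univ _, hmt⟩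

lemma aux_mval_ratio (hconn : G.Connected) (hN : 3 ≤ Fintype.card V) (i : V) :
    mval G i / ∑ j : V, mval G j = adjBetweenness G i / ∑ j : V, adjBetweenness G j := by
  have h3 : (3 : ℝ) ≤ (Fintype.card V : ℝ) := by exact_mod_cast hN
  set c := (((Fintype.card V : ℝ) - 1) * ((Fintype.card V : ℝ) - 2)
      / (Fintype.card V : ℝ) ^ 2) with hc
  have hc0 : 0 < c := by
    apply div_pos
    · nlinarith
    · nlinarith
  have hsum : ∑ j : V, mval G j = c * ∑ j : V, adjBetweenness G j := by
    rw [Finset.mul_sum]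
    exact Finset.sum_congr rfl fun j _ => aux_mval_rel G hN j
  rw [aux_mval_rel G hN i, hsum, mul_div_mul_left _ _ hc0.ne']
end

/-- Let `G` be a finite connected simple graph on `N ≥ 3` vertices and consider
the taxi drive on `G` with uniformly random destinations (`β = 0`): starting from a fixed vertex
`t₀`, the destinations `t_1, t_2, …` are i.i.d. uniform on `V`, and trip `k` traverses an
independently and uniformly chosen shortest path from `t_{k-1}` to `t_k`, spending one time unit
on each vertex of that path except its origin.  (This is modelled by i.i.d. steps
`X 1, X 2, … : Ω → TaxiStep G`, each uniform on the finite type `TaxiStep G`; uniformity on the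
product means exactly that the destination is uniform and the shortest-path choices are uniform
and independent of everything else.)  Then almost surely, for every vertex `i`, the fraction of
time units spent at `i` during the first `n` trips converges, as `n → ∞`, to
`b_i' / Σ_j b_j'`: the stationary density of the taxi drive is the normalized adjusted
betweenness. -/
theorem taxi_drive_stationary_density {V : Type*} [Fintype V] [DecidableEq V]
    (G : SimpleGraph V) [DecidableRel G.Adj] (hconn : G.Connected)
    (hN : 3 ≤ Fintype.card V) (t₀ : V)
    {Ω : Type*} [mΩ : MeasurableSpace Ω] (μ : Measure Ω) [IsProbabilityMeasure μ]
    (X : ℕ → Ω → TaxiStep G)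
    (hmeas : ∀ k, @Measurable Ω (TaxiStep G) mΩ ⊤ (X k))
    (hindep : iIndepFun (m := fun _ : ℕ => (⊤ : MeasurableSpace (TaxiStep G))) X μ)
    (hunif : ∀ k, 1 ≤ k → ∀ x : TaxiStep G,
      μ {ω | X k ω = x} = (Fintype.card (TaxiStep G) : ENNReal)⁻¹) :
    ∀ᵐ ω ∂μ, ∀ i : V,
      Tendsto
        (fun n : ℕ =>
          (∑ k ∈ Finset.Icc 1 n, (taxiVisits t₀ X i k ω : ℝ)) /
            ∑ k ∈ Finset.Icc 1 n, (taxiTripTime t₀ X k ω : ℝ))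
        atTop (nhds (adjBetweenness G i / ∑ j : V, adjBetweenness G j)) := by
  classical
  have hE : ∀ i : V, ∀ᵐ ω ∂μ, Tendsto
      (fun M : ℕ => (∑ j ∈ Finset.range M, taxiF G i (X (2 * j + 1) ω, X (2 * j + 1 + 1) ω))
        / (M : ℝ)) atTop (𝓝 (mval G i)) :=
    fun i => aux_slln G hconn μ X hmeas hindep hunif i 1 le_rfl
  have hO : ∀ i : V, ∀ᵐ ω ∂μ, Tendsto
      (fun M : ℕ => (∑ j ∈ Finset.range M, taxiF G i (X (2 * j + 2) ω, X (2 * j + 2 + 1) ω))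
        / (M : ℝ)) atTop (𝓝 (mval G i)) :=
    fun i => aux_slln G hconn μ X hmeas hindep hunif i 2 (by omega)
  have hae : ∀ᵐ ω ∂μ, ∀ i : V,
      (Tendsto (fun M : ℕ => (∑ j ∈ Finset.range M,
          taxiF G i (X (2 * j + 1) ω, X (2 * j + 1 + 1) ω)) / (M : ℝ)) atTop (𝓝 (mval G i)) ∧
       Tendsto (fun M : ℕ => (∑ j ∈ Finset.range M,
          taxiF G i (X (2 * j + 2) ω, X (2 * j + 2 + 1) ω)) / (M : ℝ)) atTop (𝓝 (mval G i))) := by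
    rw [ae_all_iff]
    intro i
    filter_upwards [hE i, hO i] with ω h1 h2 using ⟨h1, h2⟩
  filter_upwards [hae] with ω hω
  intro i
  -- visits rewritten through taxiF
  have hvisE : ∀ (jv : V) (j : ℕ),
      (taxiVisits t₀ X jv (2 * j + 2) ω : ℝ) = taxiF G jv (X (2 * j + 1) ω, X (2 * j + 1 + 1) ω) := by
    intro jv j
    rfl
  have hvisO : ∀ (jv : V) (j : ℕ),
      (taxiVisits t₀ X jv (2 * j + 3) ω : ℝ) = taxiF G jv (X (2 * j + 2) ω, X (2 * j + 2 + 1) ω) := by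
    intro jv j
    rfl
  have hnum : ∀ jv : V, Tendsto
      (fun n : ℕ => (∑ k ∈ Finset.Icc 1 n, (taxiVisits t₀ X jv k ω : ℝ)) / (n : ℝ))
      atTop (𝓝 (mval G jv)) := by
    intro jv
    apply aux_combine (fun k => (taxiVisits t₀ X jv k ω : ℝ))
    · exact (hω jv).1
    · exact (hω jv).2
  have htime : ∀ k : ℕ, (taxiTripTime t₀ X k ω : ℝ) = ∑ jv : V, (taxiVisits t₀ X jv k ω : ℝ) := by
    intro k
    have h1 : ∑ jv : V, taxiVisits t₀ X jv k ω = taxiTripTime t₀ X k ω := by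
      unfold taxiVisits taxiTripTime
      rw [aux_sum_count, List.length_tail, SimpleGraph.Walk.length_support]
      simp
    rw [← h1]
    push_cast
    rfl
  have hden : Tendsto
      (fun n : ℕ => (∑ k ∈ Finset.Icc 1 n, (taxiTripTime t₀ X k ω : ℝ)) / (n : ℝ))
      atTop (𝓝 (∑ jv : V, mval G jv)) := by
    have heq : ∀ n : ℕ, (∑ k ∈ Finset.Icc 1 n, (taxiTripTime t₀ X k ω : ℝ)) / (n : ℝ)
        = ∑ jv : V, ((∑ k ∈ Finset.Icc 1 n, (taxiVisits t₀ X jv k ω : ℝ)) / (n : ℝ)) := by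
      intro n
      rw [← Finset.sum_div]
      congr 1
      rw [Finset.sum_comm]
      exact Finset.sum_congr rfl fun k _ => htime k
    rw [show (fun n : ℕ => (∑ k ∈ Finset.Icc 1 n, (taxiTripTime t₀ X k ω : ℝ)) / (n : ℝ))
        = fun n : ℕ => ∑ jv : V, ((∑ k ∈ Finset.Icc 1 n, (taxiVisits t₀ X jv k ω : ℝ)) / (n : ℝ))
        from funext heq]
    exact tendsto_finset_sum _ fun jv _ => hnum jv
  have hpos := aux_mval_sum_pos G hconn hN
  have hratio := (hnum i).div hden hpos.ne'
  rw [aux_mval_ratio G hconn hN i] at hratio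
  apply hratio.congr'
  filter_upwards [eventually_ge_atTop 1] with n hn
  have hn0 : (n : ℝ) ≠ 0 := by positivity
  exact aux_div_div _ _ _ hn0
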